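/- Let N ≥ 1, let 0 = x₀ < x₁ < ⋯ < x_N = 1 be a partition of [0,1] with max_{i} (x_{i+1} − x_i) ≤ h, and let g : [0,1] → ℝ be continuously differentiable with g(x_i) = 0 for all i = 0, 1, …, N. Then ∫₀¹ g(x)² dx ≤ h² ∫₀¹ g'(x)² dx. -/

import Mathlib

open MeasureTheory intervalIntegral

lemma cs_helper (a b : ℝ) (hab : a ≤ b) (f : ℝ → ℝ) (hf : Continuous f) :
    (∫ t in a..b, f t) ^ 2 ≤ (b - a) * ∫ t in a..b, f t ^ 2 := by
  have hμ : (volume.restrict (Set.Ioc a b)) Set.univ = ENNReal.ofReal (b - a) := by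
    simp [Real.volume_Ioc]
  set μ := volume.restrict (Set.Ioc a b) with hμdef
  have hfin : IsFiniteMeasure μ := by
    constructor; rw [hμ]; exact ENNReal.ofReal_lt_top
  obtain ⟨C, hC⟩ := (isCompact_Icc (a := a) (b := b)).exists_bound_of_continuousOn
    hf.continuousOn
  have hbd : ∀ᵐ t ∂μ, ‖f t‖ ≤ C := by
    filter_upwards [ae_restrict_mem measurableSet_Ioc] with t ht
    exact hC t (Set.Ioc_subset_Icc_self ht)
  have hmemabs : MemLp (fun t => |f t|) (ENNReal.ofReal 2) μ := by
    rw [show ENNReal.ofReal 2 = 2 by norm_num]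
    exact ((MemLp.of_bound hf.aestronglyMeasurable C hbd : MemLp f 2 μ)).abs
  have hmem1 : MemLp (fun _ : ℝ => (1:ℝ)) (ENNReal.ofReal 2) μ := memLp_const 1
  have hconj : Real.HolderConjugate 2 2 := Real.holderConjugate_iff.mpr ⟨by norm_num, by norm_num⟩
  have hold := integral_mul_le_Lp_mul_Lq_of_nonneg hconj
    (Filter.Eventually.of_forall fun t => zero_le_one)
    (Filter.Eventually.of_forall fun t => abs_nonneg (f t)) hmem1 hmemabs
  simp only [one_mul] at hold
  -- rewrite rpow integrals
  have h1 : ∫ t, (1:ℝ) ^ (2:ℝ) ∂μ = b - a := by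
    simp [MeasureTheory.integral_const, Measure.real, hμ, ENNReal.toReal_ofReal (sub_nonneg.mpr hab)]
  have h2 : ∫ t, |f t| ^ (2:ℝ) ∂μ = ∫ t, f t ^ 2 ∂μ := by
    refine integral_congr_ae (Filter.Eventually.of_forall fun t => ?_)
    have : |f t| ^ (2:ℝ) = |f t| ^ (2:ℕ) := by
      rw [← Real.rpow_natCast]; norm_num
    simp only [this, sq_abs]
  rw [h1, h2] at hold
  have hIa : ∫ t, |f t| ∂μ = ∫ t in a..b, |f t| := by
    rw [intervalIntegral.integral_of_le hab]
  have hI2 : ∫ t, f t ^ 2 ∂μ = ∫ t in a..b, f t ^ 2 := by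
    rw [intervalIntegral.integral_of_le hab]
  rw [hIa, hI2] at hold
  have hI2nn : 0 ≤ ∫ t in a..b, f t ^ 2 :=
    intervalIntegral.integral_nonneg hab fun t _ => sq_nonneg _
  have habs : |∫ t in a..b, f t| ≤ ∫ t in a..b, |f t| := by
    exact intervalIntegral.abs_integral_le_integral_abs (μ := volume) hab
  have habsnn : 0 ≤ ∫ t in a..b, |f t| :=
    intervalIntegral.integral_nonneg hab fun t _ => abs_nonneg _
  calc (∫ t in a..b, f t) ^ 2 = |∫ t in a..b, f t| ^ 2 := (sq_abs _).symm
    _ ≤ (∫ t in a..b, |f t|) ^ 2 := pow_le_pow_left₀ (abs_nonneg _) habs 2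
    _ ≤ ((b - a) ^ (1/2:ℝ) * (∫ t in a..b, f t ^ 2) ^ (1/2:ℝ)) ^ 2 :=
        pow_le_pow_left₀ habsnn hold 2
    _ = (b - a) * ∫ t in a..b, f t ^ 2 := by
        rw [mul_pow, ← Real.rpow_natCast ((b-a) ^ (1/2:ℝ)) 2,
          ← Real.rpow_natCast ((∫ t in a..b, f t ^ 2) ^ (1/2:ℝ)) 2,
          ← Real.rpow_mul (sub_nonneg.mpr hab), ← Real.rpow_mul hI2nn]
        norm_num

lemma piece_est (a b h : ℝ) (hab : a ≤ b) (hbh : b - a ≤ h)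
    (g : ℝ → ℝ) (hg : ContDiff ℝ 1 g) (hga : g a = 0) :
    ∫ t in a..b, g t ^ 2 ≤ h ^ 2 * ∫ t in a..b, deriv g t ^ 2 := by
  have hg' : Continuous (deriv g) := hg.continuous_deriv le_rfl
  have hgc : Continuous g := hg.continuous
  have hh : 0 ≤ h := le_trans (sub_nonneg.mpr hab) hbh
  set I := ∫ t in a..b, deriv g t ^ 2 with hI
  have hInn : 0 ≤ I := intervalIntegral.integral_nonneg hab fun t _ => sq_nonneg _
  have key : ∀ t ∈ Set.Icc a b, g t ^ 2 ≤ h * I := by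
    intro t ht
    have hat : a ≤ t := ht.1
    have hgt : g t = ∫ s in a..t, deriv g s := by
      rw [intervalIntegral.integral_deriv_eq_sub
        (fun s _ => (hg.differentiable one_ne_zero).differentiableAt)
        (hg'.intervalIntegrable a t), hga, sub_zero]
    have h1 : g t ^ 2 ≤ (t - a) * ∫ s in a..t, deriv g s ^ 2 := by
      rw [hgt]; exact cs_helper a t hat (deriv g) hg'
    have h2 : ∫ s in a..t, deriv g s ^ 2 ≤ I :=
      intervalIntegral.integral_mono_interval le_rfl hat ht.2
        (Filter.Eventually.of_forall fun s => sq_nonneg _)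
        ((hg'.pow 2).intervalIntegrable a b)
    calc g t ^ 2 ≤ (t - a) * ∫ s in a..t, deriv g s ^ 2 := h1
      _ ≤ h * I := by
          apply mul_le_mul (le_trans (by linarith [ht.2]) hbh) h2
            (intervalIntegral.integral_nonneg hat fun s _ => sq_nonneg _) hh
  calc ∫ t in a..b, g t ^ 2 ≤ ∫ t in a..b, h * I :=
        intervalIntegral.integral_mono_on hab
          ((hgc.pow 2).intervalIntegrable a b)
          (intervalIntegrable_const) key
    _ = (b - a) * (h * I) := by rw [intervalIntegral.integral_const]; ring_nf
    _ ≤ h * (h * I) := mul_le_mul_of_nonneg_right hbh (mul_nonneg hh hInn)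
    _ = h ^ 2 * I := by ring


/-- Discrete Poincaré-type estimate: if `g ∈ C¹` vanishes at all nodes of a partition
`0 = x₀ < x₁ < ⋯ < x_N = 1` of `[0,1]` with mesh size at most `h`, then
`∫₀¹ g² ≤ h² ∫₀¹ (g')²`. -/
theorem poincare_partition_estimate
    (N : ℕ) (hN : 1 ≤ N) (x : Fin (N + 1) → ℝ) (h : ℝ)
    (hmono : StrictMono x) (hx0 : x 0 = 0) (hxN : x (Fin.last N) = 1)
    (hmesh : ∀ i : Fin N, x i.succ - x i.castSucc ≤ h)
    (g : ℝ → ℝ) (hg : ContDiff ℝ 1 g)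
    (hgz : ∀ i, g (x i) = 0) :
    ∫ t in (0 : ℝ)..1, g t ^ 2 ≤ h ^ 2 * ∫ t in (0 : ℝ)..1, deriv g t ^ 2 := by
  have hgc : Continuous g := hg.continuous
  have hg' : Continuous (deriv g) := hg.continuous_deriv le_rfl
  set y : ℕ → ℝ := fun i => x ⟨min i N, Nat.lt_succ_of_le (min_le_right i N)⟩ with hy
  have hy0 : y 0 = 0 := by
    rw [hy]; simpa using hx0
  have hyN : y N = 1 := by
    rw [hy]; simp only [min_self]
    convert hxN using 2
    rfl
  have hpiece : ∀ i < N, ∫ t in y i..y (i+1), g t ^ 2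
      ≤ h ^ 2 * ∫ t in y i..y (i+1), deriv g t ^ 2 := by
    intro i hi
    have e1 : y i = x ((⟨i, hi⟩ : Fin N).castSucc) := by
      simp [hy, Fin.castSucc, Fin.castAdd, Fin.castLE, Nat.min_eq_left (le_of_lt hi)]
    have e2 : y (i+1) = x ((⟨i, hi⟩ : Fin N).succ) := by
      simp [hy, Fin.succ, Nat.min_eq_left (Nat.succ_le_of_lt hi)]
    have hab : y i ≤ y (i+1) := by
      rw [e1, e2]
      exact le_of_lt (hmono Fin.castSucc_lt_succ)
    have hbh : y (i+1) - y i ≤ h := by rw [e1, e2]; exact hmesh ⟨i, hi⟩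
    have hga : g (y i) = 0 := by rw [e1]; exact hgz _
    exact piece_est _ _ _ hab hbh g hg hga
  have hs1 : ∑ i ∈ Finset.range N, ∫ t in y i..y (i+1), g t ^ 2
      = ∫ t in (0:ℝ)..1, g t ^ 2 := by
    rw [intervalIntegral.sum_integral_adjacent_intervals (f := fun t => g t ^ 2)
      (fun k _ => (hgc.pow 2).intervalIntegrable _ _), hy0, hyN]
  have hs2 : ∑ i ∈ Finset.range N, ∫ t in y i..y (i+1), deriv g t ^ 2
      = ∫ t in (0:ℝ)..1, deriv g t ^ 2 := by
    rw [intervalIntegral.sum_integral_adjacent_intervals (f := fun t => deriv g t ^ 2)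
      (fun k _ => (hg'.pow 2).intervalIntegrable _ _), hy0, hyN]
  rw [← hs1, ← hs2, Finset.mul_sum]
  exact Finset.sum_le_sum fun i hi => hpiece i (Finset.mem_range.mp hi)
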